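/- Let F be a field and A an n×n matrix over F, and let λ₀ be an eigenvalue of A whose algebraic multiplicity is greater than 1 and whose geometric multiplicity is 1. Then wᵀv = 0 for any right eigenvector v and any left eigenvector w of A for λ₀. -/

import Mathlib

open Matrix Polynomial


lemma charpoly_fin_one' {F : Type*} [Field F] (M : Matrix (Fin 1) (Fin 1) F) :
    M.charpoly = X - C (M 0 0) := by
  rw [Matrix.charpoly, Matrix.det_fin_one, charmatrix_apply_eq]

lemma exists_eigen_of_isRoot {F : Type*} [Field F] {M : Type*} [AddCommGroup M] [Module F M]
    [FiniteDimensional F M] (f : Module.End F M) {μ : F}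
    (h : f.charpoly.IsRoot μ) : ∃ y : M, y ≠ 0 ∧ f y = μ • y := by
  classical
  set b := Module.finBasis F M
  set M₂ := LinearMap.toMatrix b b f with hM₂
  have hc : M₂.charpoly = f.charpoly := LinearMap.charpoly_toMatrix f b
  have hroot : (Polynomial.eval μ M₂.charpoly) = 0 := by rw [hc]; exact h
  have hdet : (μ • (1 : Matrix _ _ F) - M₂).det = 0 := by
    have := (Polynomial.evalRingHom μ).map_det (charmatrix M₂)
    rw [← Matrix.charpoly] at this
    rw [← hroot]
    simp only [coe_evalRingHom] at this
    rw [this]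
    congr 1
    ext i j
    by_cases hij : i = j
    · subst hij; simp [charmatrix_apply_eq, Matrix.one_apply]
    · simp [charmatrix_apply_ne _ _ _ hij, Matrix.one_apply, hij]
  obtain ⟨x, hx0, hx⟩ := (Matrix.exists_mulVec_eq_zero_iff).mpr hdet
  have hx' : M₂ *ᵥ x = μ • x := by
    have h0 : μ • x - M₂ *ᵥ x = 0 := by
      rw [← hx, Matrix.sub_mulVec]; congr 1
      rw [Matrix.smul_mulVec, Matrix.one_mulVec]
    exact (sub_eq_zero.mp h0).symm
  set y := b.equivFun.symm x with hy
  have hrepr : ⇑(b.repr y) = x := by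
    rw [← Module.Basis.equivFun_apply, hy, LinearEquiv.apply_symm_apply]
  refine ⟨y, fun h0 => hx0 (by rwa [LinearEquiv.map_eq_zero_iff] at h0), ?_⟩
  have h2 : ⇑(b.repr (f y)) = ⇑(b.repr (μ • y)) := by
    have h3 := LinearMap.toMatrix_mulVec_repr b b f y
    rw [hrepr, ← hM₂, hx'] at h3
    rw [← h3, LinearEquiv.map_smul]
    ext i
    simp [hrepr]
  exact b.repr.injective (DFunLike.coe_injective h2)

lemma exists_gen_eigenvector {F : Type*} [Field F] {n : ℕ}
    (A : Matrix (Fin n) (Fin n) F) (lam0 : F)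
    (halg : 1 < A.charpoly.rootMultiplicity lam0)
    (hgeo : Module.finrank F
      (LinearMap.ker ((lam0 • (1 : Matrix (Fin n) (Fin n) F) - A).mulVecLin)) = 1) :
    ∃ u, (lam0 • (1 : Matrix (Fin n) (Fin n) F) - A) *ᵥ
        ((lam0 • (1 : Matrix (Fin n) (Fin n) F) - A) *ᵥ u) = 0 ∧
      (lam0 • (1 : Matrix (Fin n) (Fin n) F) - A) *ᵥ u ≠ 0 := by
  classical
  set B := lam0 • (1 : Matrix (Fin n) (Fin n) F) - A with hB
  by_contra hcon
  push_neg at hcon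
  set f := A.mulVecLin with hf
  set K := LinearMap.ker B.mulVecLin with hK
  set W := LinearMap.range B.mulVecLin with hW
  have hBv : ∀ x : Fin n → F, B *ᵥ x = lam0 • x - A *ᵥ x := fun x => by
    rw [hB, Matrix.sub_mulVec, Matrix.smul_mulVec, Matrix.one_mulVec]
  have hdisj : Disjoint K W := by
    rw [Submodule.disjoint_def]
    rintro x hxK ⟨u, rfl⟩
    have h1 : B *ᵥ (B *ᵥ u) = 0 := by
      have h2 := hxK
      rw [hK, LinearMap.mem_ker, Matrix.mulVecLin_apply, Matrix.mulVecLin_apply] at h2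
      exact h2
    rw [Matrix.mulVecLin_apply]
    exact hcon u h1
  have hrank := LinearMap.finrank_range_add_finrank_ker B.mulVecLin
  have hn : Module.finrank F (Fin n → F) = n := Module.finrank_fin_fun F
  have hcompl : IsCompl K W := by
    refine ⟨hdisj, codisjoint_iff.mpr ?_⟩
    apply Submodule.eq_top_of_finrank_eq
    have h1 := Submodule.finrank_sup_add_finrank_inf_eq K W
    rw [disjoint_iff.mp hdisj, finrank_bot] at h1
    rw [hn]
    rw [hn] at hrank
    rw [← hK, ← hW] at hrank
    omega
  have hAK : ∀ x ∈ K, f x ∈ K := by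
    intro x hx
    have hx' : B *ᵥ x = 0 := by simpa [hK, Matrix.mulVecLin_apply, LinearMap.mem_ker] using hx
    have h0 : lam0 • x - A *ᵥ x = 0 := by rw [← hBv x, hx']
    have hAx : A *ᵥ x = lam0 • x := (sub_eq_zero.mp h0).symm
    show f x ∈ K
    rw [hK, LinearMap.mem_ker, hf, Matrix.mulVecLin_apply, Matrix.mulVecLin_apply, hAx,
      Matrix.mulVec_smul, hx', smul_zero]
  have hcomm : A * B = B * A := by
    rw [hB, Matrix.mul_sub, Matrix.sub_mul, Matrix.mul_smul, Matrix.smul_mul,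
      Matrix.mul_one, Matrix.one_mul]
  have hAW : ∀ x ∈ W, f x ∈ W := by
    rintro x ⟨u, rfl⟩
    refine ⟨A *ᵥ u, ?_⟩
    simp only [hf, Matrix.mulVecLin_apply]
    rw [Matrix.mulVec_mulVec, Matrix.mulVec_mulVec, ← hcomm]
  set f1 := f.restrict hAK with hf1d
  set f2 := f.restrict hAW with hf2d
  set e := Submodule.prodEquivOfIsCompl K W hcompl with he
  have main : ∀ q : K × W, e ((f1.prodMap f2) q) = f (e q) := by
    rintro ⟨y, z⟩
    rw [he, hf1d, hf2d]
    simp only [LinearMap.prodMap_apply, Submodule.coe_prodEquivOfIsCompl',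
      LinearMap.restrict_coe_apply, map_add]
  have hconj : e.conj (f1.prodMap f2) = f := by
    refine LinearMap.ext fun x => ?_
    rw [LinearEquiv.conj_apply]
    simp only [LinearMap.coe_comp, Function.comp_apply, LinearEquiv.coe_coe]
    rw [main (e.symm x), e.apply_symm_apply]
  have hchar : f.charpoly = f1.charpoly * f2.charpoly := by
    rw [← hconj, LinearEquiv.charpoly_conj, LinearMap.charpoly_prodMap]
  have hf1 : f1 = lam0 • LinearMap.id := by
    refine LinearMap.ext fun y => Subtype.ext ?_
    rw [hf1d, LinearMap.restrict_coe_apply]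
    have hy : B *ᵥ (y : Fin n → F) = 0 := by
      have hy2 : B.mulVecLin (y : Fin n → F) = 0 := LinearMap.mem_ker.mp y.2
      rwa [Matrix.mulVecLin_apply] at hy2
    have h0 : lam0 • (y : Fin n → F) - A *ᵥ (y : Fin n → F) = 0 := by rw [← hBv, hy]
    have hAy : A *ᵥ (y : Fin n → F) = lam0 • (y : Fin n → F) := (sub_eq_zero.mp h0).symm
    rw [hf, Matrix.mulVecLin_apply, hAy]
    rfl
  have hchar1 : f1.charpoly = X - C lam0 := by
    rw [hf1]
    let b : Module.Basis (Fin 1) F K := Module.finBasisOfFinrankEq F K hgeo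
    rw [← LinearMap.charpoly_toMatrix (lam0 • LinearMap.id) b]
    have : LinearMap.toMatrix b b (lam0 • LinearMap.id) = lam0 • (1 : Matrix (Fin 1) (Fin 1) F) := by
      rw [LinearEquiv.map_smul, LinearMap.toMatrix_id]
    rw [this, charpoly_fin_one']
    simp
  have hroot2 : ¬ f2.charpoly.IsRoot lam0 := by
    intro hr
    obtain ⟨y, hy0, hy⟩ := exists_eigen_of_isRoot f2 hr
    have h1 : A *ᵥ (y : Fin n → F) = lam0 • (y : Fin n → F) := by
      have h2 := congrArg Subtype.val hy
      rw [hf2d, LinearMap.restrict_coe_apply, SetLike.val_smul] at h2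
      simpa [hf, Matrix.mulVecLin_apply] using h2
    have hyK : (y : Fin n → F) ∈ K := by
      rw [hK, LinearMap.mem_ker, Matrix.mulVecLin_apply, hBv, h1, sub_self]
    have hy' : (y : Fin n → F) = 0 := Submodule.disjoint_def.mp hdisj _ hyK y.2
    exact hy0 (Subtype.ext hy')
  have hA : A.charpoly = f.charpoly := by
    rw [← LinearMap.charpoly_toMatrix f (Pi.basisFun F (Fin n)), LinearMap.toMatrix_eq_toMatrix']
    congr 1
    exact (LinearMap.toMatrix'.apply_symm_apply A).symm
  have hne : f1.charpoly * f2.charpoly ≠ 0 := by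
    rw [← hchar]; exact f.charpoly_monic.ne_zero
  have hcount : A.charpoly.rootMultiplicity lam0 = 1 := by
    rw [hA, hchar, Polynomial.rootMultiplicity_mul hne, hchar1,
      Polynomial.rootMultiplicity_X_sub_C_self, Polynomial.rootMultiplicity_eq_zero hroot2]
  omega

/-- If `λ₀` is an eigenvalue of `A` with algebraic multiplicity greater than `1` and
geometric multiplicity `1`, then `wᵀ v = 0` for any right eigenvector `v` and any left
eigenvector `w` of `A` for `λ₀`. -/
theorem dot_eq_zero_of_defective
    {F : Type*} [Field F] {n : ℕ} (A : Matrix (Fin n) (Fin n) F) (lam0 : F)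
    (halg : 1 < A.charpoly.rootMultiplicity lam0)
    (hgeo : Module.finrank F
      (LinearMap.ker ((lam0 • (1 : Matrix (Fin n) (Fin n) F) - A).mulVecLin)) = 1) :
    ∀ v w : Fin n → F, v ≠ 0 → A.mulVec v = lam0 • v →
      w ≠ 0 → A.vecMul w = lam0 • w → w ⬝ᵥ v = 0 := by
  intro v w hv hAv hw hAw
  obtain ⟨u, h2, h1⟩ := exists_gen_eigenvector A lam0 halg hgeo
  set B := lam0 • (1 : Matrix (Fin n) (Fin n) F) - A with hB
  have hBv : ∀ x : Fin n → F, B *ᵥ x = lam0 • x - A *ᵥ x := fun x => by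
    rw [hB, Matrix.sub_mulVec, Matrix.smul_mulVec, Matrix.one_mulVec]
  have hvK : v ∈ LinearMap.ker B.mulVecLin := by
    rw [LinearMap.mem_ker, Matrix.mulVecLin_apply, hBv, hAv, sub_self]
  have hspan : LinearMap.ker B.mulVecLin = Submodule.span F {v} := by
    symm
    apply Submodule.eq_of_le_of_finrank_le
    · rw [Submodule.span_le, Set.singleton_subset_iff]; exact hvK
    · rw [hgeo, finrank_span_singleton hv]
  have hmem : B *ᵥ u ∈ Submodule.span F {v} := by
    rw [← hspan, LinearMap.mem_ker, Matrix.mulVecLin_apply]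
    exact h2
  obtain ⟨c, hc⟩ := Submodule.mem_span_singleton.mp hmem
  have hc0 : c ≠ 0 := fun h => h1 (by rw [← hc, h, zero_smul])
  have hwB : B.vecMul w = 0 := by
    rw [hB, Matrix.vecMul_sub, hAw]
    have hsm : w ᵥ* (lam0 • (1 : Matrix (Fin n) (Fin n) F)) = lam0 • w := by
      ext j
      simp [Matrix.vecMul, dotProduct, Matrix.one_apply, mul_ite,
        Finset.sum_ite_eq, mul_comm]
    rw [hsm, sub_self]
  have hdot : w ⬝ᵥ (B *ᵥ u) = 0 := by
    rw [Matrix.dotProduct_mulVec, hwB, zero_dotProduct]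
  rw [← hc, dotProduct_smul, smul_eq_mul] at hdot
  exact (mul_eq_zero.mp hdot).resolve_left hc0
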